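/- Let Ω ⊂ ℝ^d be compact with Borel probability measure ρ, and let f, gₙ : Ω → ℝ be measurable and bounded. For every 1 ≤ p, q < ∞, Wass_p(f_*ρ, (gₙ)_*ρ)^{p+q} ≤ C(Ω,p,q) · ‖f − gₙ‖_{L^q(Ω,ρ)}^q · ‖f − gₙ‖_{L^∞(Ω)}^p for some constant C depending only on Ω, p, q. -/

import Mathlib

open MeasureTheory Set
open scoped ENNReal

/-- A coupling of two measures on ℝ: a measure on ℝ × ℝ with the prescribed marginals. -/
def IsCoupling (γ : Measure (ℝ × ℝ)) (μ ν : Measure ℝ) : Prop :=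
  γ.map Prod.fst = μ ∧ γ.map Prod.snd = ν

/-- The Wasserstein-p distance between two Borel measures on ℝ. -/
noncomputable def Wass (p : ℝ) (μ ν : Measure ℝ) : ℝ :=
  sInf {w : ℝ | ∃ γ : Measure (ℝ × ℝ), IsCoupling γ μ ν ∧
    w = (∫ z : ℝ × ℝ, |z.1 - z.2| ^ p ∂γ) ^ (1 / p)}

/-- The sup norm of a function over a set Ω. -/
noncomputable def supNormOn {X : Type*} (Ω : Set X) (h : X → ℝ) : ℝ :=
  sSup ((fun x => |h x|) '' Ω)

/-- For compact Ω ⊂ ℝ^d with Borel probability measure ρ, bounded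
measurable f, gₙ and 1 ≤ p, q < ∞, there is C = C(Ω,p,q) with
Wass_p(f_*ρ, (gₙ)_*ρ)^{p+q} ≤ C ‖f − gₙ‖_{L^q(ρ)}^q ‖f − gₙ‖_{L^∞(Ω)}^p. -/
theorem wasserstein_interpolation
    (d : ℕ) (Ω : Set (Fin d → ℝ)) (hΩc : IsCompact Ω) (hΩm : MeasurableSet Ω)
    (p q : ℝ) (hp : 1 ≤ p) (hq : 1 ≤ q) :
    ∃ C : ℝ, 0 < C ∧
      ∀ (ρ : Measure (Fin d → ℝ)), IsProbabilityMeasure ρ → ρ Ωᶜ = 0 →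
      ∀ f gₙ : (Fin d → ℝ) → ℝ, Measurable f → Measurable gₙ →
        (∃ M : ℝ, ∀ x ∈ Ω, |f x| ≤ M) → (∃ M : ℝ, ∀ x ∈ Ω, |gₙ x| ≤ M) →
        Wass p (ρ.map f) (ρ.map gₙ) ^ (p + q) ≤
          C * (∫ α, |f α - gₙ α| ^ q ∂ρ) * supNormOn Ω (f - gₙ) ^ p := by
  refine ⟨1, one_pos, ?_⟩
  rintro ρ hρ hρΩ f g hf hg ⟨Mf, hMf⟩ ⟨Mg, hMg⟩
  have hp0 : (0:ℝ) < p := lt_of_lt_of_le one_pos hp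
  have hq0 : (0:ℝ) < q := lt_of_lt_of_le one_pos hq
  -- Ω is nonempty
  have hΩne : Ω.Nonempty := by
    rcases Set.eq_empty_or_nonempty Ω with hE | hE
    · exfalso
      have h1 := hρΩ
      rw [hE, Set.compl_empty, measure_univ] at h1
      exact one_ne_zero h1
    · exact hE
  set h : (Fin d → ℝ) → ℝ := fun x => f x - g x with hdef
  have hhm : Measurable h := hf.sub hg
  set S := supNormOn Ω (f - g) with hSdef
  have hbdd : BddAbove ((fun x => |(f - g) x|) '' Ω) := by
    refine ⟨Mf + Mg, ?_⟩
    rintro _ ⟨x, hx, rfl⟩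
    calc |(f - g) x| = |f x - g x| := by simp [Pi.sub_apply]
      _ ≤ |f x| + |g x| := abs_sub _ _
      _ ≤ Mf + Mg := add_le_add (hMf x hx) (hMg x hx)
  have hS_le : ∀ x ∈ Ω, |h x| ≤ S := by
    intro x hx
    exact le_csSup hbdd ⟨x, hx, by simp [hdef, Pi.sub_apply]⟩
  have hS0 : 0 ≤ S := by
    obtain ⟨x, hx⟩ := hΩne
    exact (abs_nonneg _).trans (hS_le x hx)
  have hae : ∀ᵐ x ∂ρ, x ∈ Ω := by
    rw [ae_iff]
    exact hρΩ
  have haeS : ∀ᵐ x ∂ρ, |h x| ≤ S := hae.mono fun x hx => hS_le x hx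
  -- integrability of powers
  have hmr : ∀ r : ℝ, 0 ≤ r → Measurable (fun x => |h x| ^ r) := by
    intro r hr
    exact (Real.continuous_rpow_const hr).measurable.comp hhm.abs
  have hint : ∀ r : ℝ, 0 ≤ r → Integrable (fun x => |h x| ^ r) ρ := by
    intro r hr
    refine Integrable.mono' (integrable_const (S ^ r))
      ((hmr r hr).aestronglyMeasurable) ?_
    filter_upwards [haeS] with x hx
    rw [Real.norm_eq_abs, abs_of_nonneg (Real.rpow_nonneg (abs_nonneg _) _)]
    exact Real.rpow_le_rpow (abs_nonneg _) hx hr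
  set Iq := ∫ x, |h x| ^ q ∂ρ with hIqdef
  set Ip := ∫ x, |h x| ^ p ∂ρ with hIpdef
  have hIq0 : 0 ≤ Iq := integral_nonneg fun x => Real.rpow_nonneg (abs_nonneg _) _
  have hIp0 : 0 ≤ Ip := integral_nonneg fun x => Real.rpow_nonneg (abs_nonneg _) _
  have hintS : ∀ r : ℝ, 0 ≤ r → (∫ x, |h x| ^ r ∂ρ) ≤ S ^ r := by
    intro r hr
    have h1 : (∫ x, |h x| ^ r ∂ρ) ≤ ∫ _x, S ^ r ∂ρ := by
      refine integral_mono_ae (hint r hr) (integrable_const _) ?_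
      filter_upwards [haeS] with x hx
      exact Real.rpow_le_rpow (abs_nonneg _) hx hr
    simpa [measure_univ] using h1
  have hIqS : Iq ≤ S ^ q := hintS q hq0.le
  have hIpS : Ip ≤ S ^ p := hintS p hp0.le
  -- the canonical coupling
  have hmem : Ip ^ (1 / p) ∈ {w : ℝ | ∃ γ : Measure (ℝ × ℝ),
      IsCoupling γ (ρ.map f) (ρ.map g) ∧
      w = (∫ z : ℝ × ℝ, |z.1 - z.2| ^ p ∂γ) ^ (1 / p)} := by
    refine ⟨ρ.map (fun x => (f x, g x)), ⟨?_, ?_⟩, ?_⟩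
    · rw [Measure.map_map measurable_fst (hf.prodMk hg)]; rfl
    · rw [Measure.map_map measurable_snd (hf.prodMk hg)]; rfl
    · have hmz : Measurable fun z : ℝ × ℝ => |z.1 - z.2| ^ p :=
        (Real.continuous_rpow_const hp0.le).measurable.comp
          (measurable_fst.sub measurable_snd).abs
      rw [integral_map (hf.prodMk hg).aemeasurable hmz.aestronglyMeasurable]
  have hbdd0 : BddBelow {w : ℝ | ∃ γ : Measure (ℝ × ℝ),
      IsCoupling γ (ρ.map f) (ρ.map g) ∧
      w = (∫ z : ℝ × ℝ, |z.1 - z.2| ^ p ∂γ) ^ (1 / p)} := by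
    refine ⟨0, ?_⟩
    rintro w ⟨γ, _, rfl⟩
    exact Real.rpow_nonneg (integral_nonneg fun z => Real.rpow_nonneg (abs_nonneg _) _) _
  have hWle : Wass p (ρ.map f) (ρ.map g) ≤ Ip ^ (1 / p) := csInf_le hbdd0 hmem
  have hW0 : 0 ≤ Wass p (ρ.map f) (ρ.map g) := by
    refine le_csInf ⟨_, hmem⟩ ?_
    rintro w ⟨γ, _, rfl⟩
    exact Real.rpow_nonneg (integral_nonneg fun z => Real.rpow_nonneg (abs_nonneg _) _) _
  -- key inequality
  have hkey : Ip ^ ((p + q) / p) ≤ Iq * S ^ p := by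
    have hSq : S ^ p = (S ^ q) ^ (p / q) := by
      rw [← Real.rpow_mul hS0]
      congr 1
      field_simp
    rcases le_total q p with hqp | hpq
    · -- q ≤ p : pointwise bound
      have hIpb : Ip ≤ S ^ (p - q) * Iq := by
        have hpt : ∀ᵐ x ∂ρ, |h x| ^ p ≤ S ^ (p - q) * |h x| ^ q := by
          filter_upwards [haeS] with x hx
          have he : |h x| ^ p = |h x| ^ (p - q) * |h x| ^ q := by
            rw [← Real.rpow_add' (abs_nonneg _) (by rw [sub_add_cancel]; linarith)]
            rw [sub_add_cancel]
          rw [he]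
          exact mul_le_mul_of_nonneg_right
            (Real.rpow_le_rpow (abs_nonneg _) hx (by linarith))
            (Real.rpow_nonneg (abs_nonneg _) _)
        have h2 := integral_mono_ae (hint p hp0.le) ((hint q hq0.le).const_mul _) hpt
        rw [integral_const_mul] at h2
        exact h2
      have h1 : Ip ^ ((p + q) / p) = Ip * Ip ^ (q / p) := by
        have e : (p + q) / p = 1 + q / p := by field_simp
        rw [e, Real.rpow_add' hIp0 (by positivity), Real.rpow_one]
      have h2 : Ip ^ (q / p) ≤ S ^ q := by
        calc Ip ^ (q / p) ≤ (S ^ p) ^ (q / p) :=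
              Real.rpow_le_rpow hIp0 hIpS (by positivity)
          _ = S ^ q := by
              rw [← Real.rpow_mul hS0]
              congr 1
              field_simp
      calc Ip ^ ((p + q) / p) = Ip * Ip ^ (q / p) := h1
        _ ≤ (S ^ (p - q) * Iq) * S ^ q := by
            refine mul_le_mul hIpb h2 (Real.rpow_nonneg hIp0 _) ?_
            positivity
        _ = Iq * S ^ p := by
            rw [mul_comm (S ^ (p - q)) Iq, mul_assoc,
              ← Real.rpow_add' hS0 (by rw [sub_add_cancel]; linarith), sub_add_cancel]
    · -- p ≤ q : Jensen via Hölder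
      have hJ : Ip ≤ Iq ^ (p / q) := by
        rcases eq_or_lt_of_le hpq with rfl | hlt
        · simp [div_self hp0.ne']; exact le_rfl
        · set r := q / p with hrdef
          have hr1 : 1 < r := (one_lt_div hp0).mpr hlt
          have hconj : r.HolderConjugate (Real.conjExponent r) :=
            Real.HolderConjugate.conjExponent hr1
          have hH := integral_mul_le_Lp_mul_Lq_of_nonneg hconj
            (f := fun x => |h x| ^ p) (g := fun _ => (1 : ℝ))
            (Filter.Eventually.of_forall fun x => Real.rpow_nonneg (abs_nonneg _) _)
            (Filter.Eventually.of_forall fun _ => zero_le_one)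
            (MemLp.of_bound ((hmr p hp0.le).aestronglyMeasurable) (S ^ p)
              (by filter_upwards [haeS] with x hx
                  rw [Real.norm_eq_abs, abs_of_nonneg (Real.rpow_nonneg (abs_nonneg _) _)]
                  exact Real.rpow_le_rpow (abs_nonneg _) hx hp0.le))
            (memLp_const 1)
          simp only [mul_one] at hH
          have he1 : (∫ x, (|h x| ^ p) ^ r ∂ρ) = Iq := by
            refine integral_congr_ae (Filter.Eventually.of_forall fun x => ?_)
            show (|h x| ^ p) ^ r = |h x| ^ q
            rw [← Real.rpow_mul (abs_nonneg _)]
            congr 1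
            rw [hrdef]; field_simp
          have he2 : (∫ _x : Fin d → ℝ, (1 : ℝ) ^ Real.conjExponent r ∂ρ) = 1 := by
            simp [Real.one_rpow, measure_univ]
          rw [he1, he2, Real.one_rpow, mul_one] at hH
          calc Ip ≤ Iq ^ (1 / r) := hH
            _ = Iq ^ (p / q) := by rw [hrdef, one_div_div]
      calc Ip ^ ((p + q) / p) ≤ (Iq ^ (p / q)) ^ ((p + q) / p) :=
            Real.rpow_le_rpow hIp0 hJ (by positivity)
        _ = Iq ^ ((p + q) / q) := by
            rw [← Real.rpow_mul hIq0]
            congr 1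
            field_simp
        _ = Iq * Iq ^ (p / q) := by
            have e : (p + q) / q = 1 + p / q := by field_simp; ring
            rw [e, Real.rpow_add' hIq0 (by positivity), Real.rpow_one]
        _ ≤ Iq * (S ^ q) ^ (p / q) := by
            refine mul_le_mul_of_nonneg_left ?_ hIq0
            exact Real.rpow_le_rpow hIq0 hIqS (by positivity)
        _ = Iq * S ^ p := by rw [← hSq]
  -- conclude
  have hgoalIq : (∫ α, |f α - g α| ^ q ∂ρ) = Iq := rfl
  calc Wass p (ρ.map f) (ρ.map g) ^ (p + q)
      ≤ (Ip ^ (1 / p)) ^ (p + q) := Real.rpow_le_rpow hW0 hWle (by positivity)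
    _ = Ip ^ ((p + q) / p) := by
        rw [← Real.rpow_mul hIp0]
        congr 1
        field_simp
    _ ≤ Iq * S ^ p := hkey
    _ = 1 * (∫ α, |f α - g α| ^ q ∂ρ) * supNormOn Ω (f - g) ^ p := by
        rw [hgoalIq, one_mul, hSdef]
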